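/- arXiv:2507.06342 — 2 statements merged into one kernel-verified Lean document; each statement's English description precedes it below -/
import Mathlib

section
/- Fix ρ₀ ∈ ℝ. For every differentiable curve γ = (x, y) : ℝ → ℝ² with y(t) > 0 for all t, satisfying the SIS system x'(t) = ρ₀·x(t) − x(t)² − 1/y(t)² and y'(t) = −ρ₀·y(t) + 2·x(t)·y(t) for all t, the function t ↦ x(t)·y(t)·(ρ₀ − x(t)) + 1/y(t) is constant. In other words, the SIS system ẋ = xρ₀ − x² − 1/y², ẏ = −yρ₀ + 2xy is Hamiltonian with Hamiltonian function H(x,y) = xy(ρ₀ − x) + 1/y, which is a first integral of the system. -/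
/-- The SIS system `ẋ = xρ₀ - x² - 1/y²`, `ẏ = -yρ₀ + 2xy` is Hamiltonian with Hamiltonian
`H(x,y) = xy(ρ₀ - x) + 1/y`, which is a first integral of the system. -/
theorem sis_first_integral (ρ₀ : ℝ) (x y : ℝ → ℝ) (hypos : ∀ t : ℝ, 0 < y t)
    (hx : ∀ t : ℝ, HasDerivAt x (x t * ρ₀ - (x t) ^ 2 - 1 / (y t) ^ 2) t)
    (hy : ∀ t : ℝ, HasDerivAt y (-(y t * ρ₀) + 2 * x t * y t) t) :
    ∀ s t : ℝ, x s * y s * (ρ₀ - x s) + 1 / y s = x t * y t * (ρ₀ - x t) + 1 / y t := by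
  have key : ∀ t : ℝ,
      HasDerivAt (fun t => x t * y t * (ρ₀ - x t) + 1 / y t) 0 t := by
    intro t
    have hyne : y t ≠ 0 := (hypos t).ne'
    have h1 := (((hx t).mul (hy t)).mul ((hasDerivAt_const t ρ₀).sub (hx t))).add
      ((hasDerivAt_const t (1:ℝ)).div (hy t) hyne)
    refine h1.congr_deriv ?_
    simp only [Pi.mul_apply, Pi.sub_apply]
    field_simp
    ring
  intro s t
  exact (is_const_of_deriv_eq_zero (fun u => (key u).differentiableAt)
    (fun u => (key u).deriv) s t)
end

section
/- Fix an integer i ≥ 1. The family of functions ℝ² → ℝ consisting of the constant function 1, the monomial functions (x,y) ↦ x^h y^k for all nonnegative integers h, k with 1 ≤ h + k ≤ i, and the four trigonometric functions (x,y) ↦ cos(x), (x,y) ↦ cos(y), (x,y) ↦ sin(x), (x,y) ↦ sin(y), is linearly independent over ℝ in the real vector space of functions from ℝ² to ℝ. -/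
open Polynomial Real

/-- A polynomial in two variables (encoded as `ℝ[Y][X]`) vanishing on an infinite grid is zero. -/
private lemma poly2_eq_zero {Q : Polynomial (Polynomial ℝ)} {D : Set ℝ} (hD : D.Infinite)
    (h : ∀ x ∈ D, ∀ y ∈ D, Polynomial.eval₂ (Polynomial.evalRingHom y) x Q = 0) :
    Q = 0 := by
  have hmap : ∀ y ∈ D, Q.map (Polynomial.evalRingHom y) = 0 := by
    intro y hy
    apply Polynomial.eq_zero_of_infinite_isRoot
    apply hD.mono
    intro x hx
    simp only [Set.mem_setOf_eq, Polynomial.IsRoot, Polynomial.eval_map]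
    exact h x hx y hy
  have hc : ∀ n, Q.coeff n = 0 := by
    intro n
    apply Polynomial.eq_zero_of_infinite_isRoot
    apply hD.mono
    intro y hy
    have h2 := congrArg (fun p => Polynomial.coeff p n) (hmap y hy)
    simpa [Polynomial.coeff_map] using h2
  exact Polynomial.ext fun n => by simp [hc n]

private lemma key (i : ℕ) (t : Finset {p : ℕ × ℕ // 1 ≤ p.1 + p.2 ∧ p.1 + p.2 ≤ i})
    (e a b c d : ℝ) (f : {p : ℕ × ℕ // 1 ≤ p.1 + p.2 ∧ p.1 + p.2 ≤ i} → ℝ)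
    (h : ∀ x y : ℝ, e + (∑ m ∈ t, f m * (x ^ m.val.1 * y ^ m.val.2))
        + a * Real.cos x + b * Real.cos y + c * Real.sin x + d * Real.sin y = 0) :
    e = 0 ∧ (∀ m ∈ t, f m = 0) ∧ a = 0 ∧ b = 0 ∧ c = 0 ∧ d = 0 := by
  classical
  set P : Polynomial (Polynomial ℝ) :=
    Polynomial.C (Polynomial.C (e + a + b)) +
      ∑ m ∈ t, Polynomial.monomial m.val.1 (Polynomial.monomial m.val.2 (f m)) with hP
  have hev : ∀ x y : ℝ, Polynomial.eval₂ (Polynomial.evalRingHom y) x P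
      = (e + a + b) + ∑ m ∈ t, f m * (x ^ m.val.1 * y ^ m.val.2) := by
    intro x y
    rw [hP, Polynomial.eval₂_add, Polynomial.eval₂_C, Polynomial.eval₂_finset_sum]
    simp only [Polynomial.eval₂_monomial, Polynomial.coe_evalRingHom, Polynomial.eval_monomial,
      Polynomial.eval_C]
    congr 1
    exact Finset.sum_congr rfl fun m _ => by ring
  set D : Set ℝ := Set.range (fun n : ℕ => (n : ℝ) * (2 * π)) with hDdef
  have hDinf : D.Infinite := by
    apply Set.infinite_range_of_injective
    intro m n hmn
    have h2 : (2 : ℝ) * π ≠ 0 := by positivity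
    exact Nat.cast_injective (mul_right_cancel₀ h2 hmn)
  have htrig : ∀ x ∈ D, Real.cos x = 1 ∧ Real.sin x = 0 := by
    intro x hx
    obtain ⟨n, hn⟩ := hx
    have hxn : x = (n : ℝ) * (2 * π) := hn.symm
    subst hxn
    refine ⟨Real.cos_nat_mul_two_pi n, ?_⟩
    have hx2 : ((n : ℝ) * (2 * π)) = ((2 * n : ℤ) : ℝ) * π := by push_cast; ring
    rw [hx2, Real.sin_int_mul_pi]
  have hP0 : P = 0 := by
    apply poly2_eq_zero hDinf
    intro x hx y hy
    obtain ⟨hcx, hsx⟩ := htrig x hx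
    obtain ⟨hcy, hsy⟩ := htrig y hy
    rw [hev]
    have := h x y
    rw [hcx, hcy, hsx, hsy] at this
    linarith
  have hcoeff : ∀ m0 ∈ t, f m0 = 0 := by
    intro m0 hm0
    have h1 : ((P.coeff m0.val.1).coeff m0.val.2) = 0 := by rw [hP0]; simp
    rw [hP, Polynomial.coeff_add, Polynomial.finset_sum_coeff, Polynomial.coeff_add,
      Polynomial.finset_sum_coeff] at h1
    have hCpart : ((Polynomial.C (Polynomial.C (e + a + b))).coeff m0.val.1).coeff m0.val.2 = 0 := by
      have hne : ¬(m0.val.1 = 0 ∧ m0.val.2 = 0) := by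
        have := m0.2.1; omega
      rw [Polynomial.coeff_C]
      split_ifs with h0
      · rw [Polynomial.coeff_C]
        split_ifs with h00
        · exact absurd ⟨h0, h00⟩ hne
        · rfl
      · simp
    have hSpart : (∑ m ∈ t,
        ((Polynomial.monomial m.val.1 (Polynomial.monomial m.val.2 (f m))).coeff m0.val.1).coeff m0.val.2)
        = f m0 := by
      rw [Finset.sum_eq_single m0]
      · simp [Polynomial.coeff_monomial]
      · intro m hm hne
        rw [Polynomial.coeff_monomial]
        split_ifs with h1
        · rw [Polynomial.coeff_monomial]
          split_ifs with h2
          · exact absurd (Subtype.ext (Prod.ext h1 h2)) hne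
          · rfl
        · simp
      · intro hm0'
        exact absurd hm0 hm0'
    rw [hCpart, hSpart] at h1
    linarith
  have h' : ∀ x y : ℝ, e + a * Real.cos x + b * Real.cos y + c * Real.sin x + d * Real.sin y = 0 := by
    intro x y
    have hz : (∑ m ∈ t, f m * (x ^ m.val.1 * y ^ m.val.2)) = 0 :=
      Finset.sum_eq_zero fun m hm => by rw [hcoeff m hm]; ring
    have := h x y
    rw [hz] at this
    linarith
  have h1 := h' 0 0
  have h2 := h' π 0
  have h3 := h' 0 π
  have h4 := h' (π/2) 0
  have h5 := h' 0 (π/2)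
  simp [Real.cos_pi, Real.sin_pi, Real.cos_pi_div_two, Real.sin_pi_div_two] at h1 h2 h3 h4 h5
  refine ⟨by linarith, hcoeff, by linarith, by linarith, by linarith, by linarith⟩

/-- The constant function `1`, the monomials `x^h y^k` for `1 ≤ h + k ≤ i`, and the four
trigonometric functions `cos x`, `cos y`, `sin x`, `sin y` form a linearly independent
family in the real vector space of functions `ℝ² → ℝ`. -/
theorem monomials_trig_linearIndependent (i : ℕ) (hi : 1 ≤ i) :
    LinearIndependent ℝ
      (fun j : Unit ⊕ {p : ℕ × ℕ // 1 ≤ p.1 + p.2 ∧ p.1 + p.2 ≤ i} ⊕ Fin 4 =>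
        Sum.elim (fun _ : Unit => fun _ : ℝ × ℝ => (1 : ℝ))
          (Sum.elim
            (fun m : {p : ℕ × ℕ // 1 ≤ p.1 + p.2 ∧ p.1 + p.2 ≤ i} =>
              fun p : ℝ × ℝ => p.1 ^ m.val.1 * p.2 ^ m.val.2)
            ![fun p : ℝ × ℝ => Real.cos p.1, fun p : ℝ × ℝ => Real.cos p.2,
              fun p : ℝ × ℝ => Real.sin p.1, fun p : ℝ × ℝ => Real.sin p.2]) j) := by
  classical
  rw [linearIndependent_iff']
  intro s f hsum
  have hunit : ∀ (sL : Finset Unit) (h : Unit → ℝ),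
      ∑ u ∈ sL, h u = if () ∈ sL then h () else 0 := by
    intro sL h
    by_cases hmem : () ∈ sL
    · have hsl : sL = {()} := by ext u; cases u; simp [hmem]
      simp [hsl]
    · have hsl : sL = ∅ := by ext u; cases u; simp [hmem]
      simp [hsl, hmem]
  have hT : ∀ (sT : Finset (Fin 4)) (h : Fin 4 → ℝ),
      ∑ k ∈ sT, h k = ∑ k : Fin 4, if k ∈ sT then h k else 0 := by
    intro sT h
    rw [Finset.sum_ite_mem, Finset.univ_inter]
  have heq : ∀ x y : ℝ,
      (if Sum.inl () ∈ s then f (Sum.inl ()) else 0)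
      + (∑ m ∈ s.toRight.toLeft, f (Sum.inr (Sum.inl m)) * (x ^ m.val.1 * y ^ m.val.2))
      + (if Sum.inr (Sum.inr 0) ∈ s then f (Sum.inr (Sum.inr 0)) else 0) * Real.cos x
      + (if Sum.inr (Sum.inr 1) ∈ s then f (Sum.inr (Sum.inr 1)) else 0) * Real.cos y
      + (if Sum.inr (Sum.inr 2) ∈ s then f (Sum.inr (Sum.inr 2)) else 0) * Real.sin x
      + (if Sum.inr (Sum.inr 3) ∈ s then f (Sum.inr (Sum.inr 3)) else 0) * Real.sin y = 0 := by
    intro x y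
    have hpt := congrFun hsum (x, y)
    rw [Finset.sum_apply, Pi.zero_apply] at hpt
    rw [← Finset.toLeft_disjSum_toRight (u := s), Finset.sum_disjSum] at hpt
    rw [← Finset.toLeft_disjSum_toRight (u := s.toRight), Finset.sum_disjSum] at hpt
    simp only [Sum.elim_inl, Sum.elim_inr, Pi.smul_apply, smul_eq_mul] at hpt
    rw [hunit] at hpt
    rw [hT] at hpt
    rw [Fin.sum_univ_four] at hpt
    simp only [Finset.mem_toLeft, Finset.mem_toRight, Matrix.cons_val_zero, Matrix.cons_val_one,
      Matrix.head_cons, Matrix.cons_val_two, Matrix.tail_cons, Matrix.cons_val_three,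
      mul_one, ite_mul, zero_mul] at hpt ⊢
    linarith [hpt]
  obtain ⟨he0, hf0, h0, h1, h2, h3⟩ :=
    key i s.toRight.toLeft _ _ _ _ _ (fun m => f (Sum.inr (Sum.inl m))) heq
  intro j hj
  match j with
  | Sum.inl () =>
    rw [if_pos hj] at he0
    exact he0
  | Sum.inr (Sum.inl m) =>
    exact hf0 m (by simp [hj])
  | Sum.inr (Sum.inr k) =>
    have hfin : ∀ k' : Fin 4,
        (if Sum.inr (Sum.inr k') ∈ s then f (Sum.inr (Sum.inr k')) else 0) = 0 →
        Sum.inr (Sum.inr k') ∈ s → f (Sum.inr (Sum.inr k')) = 0 := by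
      intro k' hk hmem
      rwa [if_pos hmem] at hk
    fin_cases k
    · exact hfin 0 h0 hj
    · exact hfin 1 h1 hj
    · exact hfin 2 h2 hj
    · exact hfin 3 h3 hj
end
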